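/- arXiv:1107.5034 — 4 statements merged into one kernel-verified Lean document; each statement's English description precedes it below -/
import Mathlib

section
/- Let K ⊆ ℂ^n be a compact set with a basis of Stein neighborhoods and suppose A(K, ℂ) has the Mergelyan property. Let σ_1, …, σ_q be distinct points of K and h_1, …, h_q ∈ ℂ^m. For every f ∈ H_loc(K, ℂ^m) and every ε > 0 there is δ > 0 such that: if ‖f(σ_j) − h_j‖ < δ for j = 1, …, q, then there exist an open set U ⊇ K and a holomorphic map g : U → ℂ^m with ‖f(ζ) − g(ζ)‖ < ε for all ζ ∈ K and g(σ_j) = h_j for j = 1, …, q. -/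
noncomputable section

/-- `u` is plurisubharmonic on `Ω ⊆ ℂ^ι`: upper semicontinuous on `Ω` and satisfying the
sub-mean value inequality over every closed complex disc contained in `Ω`. -/
def Psh {ι : Type*} [Fintype ι] (Ω : Set (EuclideanSpace ℂ ι))
    (u : EuclideanSpace ℂ ι → ℝ) : Prop :=
  UpperSemicontinuousOn u Ω ∧
    ∀ a ∈ Ω, ∀ v : EuclideanSpace ℂ ι, ∀ r : ℝ, 0 < r →
      (∀ w : ℂ, ‖w‖ ≤ r → a + w • v ∈ Ω) →
      u a ≤ (1 / (2 * Real.pi)) *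
        ∫ θ in (0:ℝ)..(2 * Real.pi),
          u (a + ((r : ℂ) * Complex.exp (θ * Complex.I)) • v)

/-- `u` is continuous and strictly plurisubharmonic on the open set `Ω`. -/
def StrictPsh {ι : Type*} [Fintype ι] (Ω : Set (EuclideanSpace ℂ ι))
    (u : EuclideanSpace ℂ ι → ℝ) : Prop :=
  ContinuousOn u Ω ∧
    ∀ a ∈ Ω, ∃ B, IsOpen B ∧ a ∈ B ∧ B ⊆ Ω ∧ ∃ c > (0:ℝ),
      Psh B (fun z => u z - c * ‖z‖ ^ 2)

/-- An open set `Ω ⊆ ℂ^ι` is Stein: it carries a continuous strictly plurisubharmonic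
exhaustion function. -/
def IsSteinOpen {ι : Type*} [Fintype ι] (Ω : Set (EuclideanSpace ℂ ι)) : Prop :=
  IsOpen Ω ∧ ∃ u, StrictPsh Ω u ∧ ∀ t : ℝ, IsCompact {z | z ∈ Ω ∧ u z ≤ t}

/-- `L` has a basis of Stein neighborhoods. -/
def HasSteinBasis {ι : Type*} [Fintype ι] (L : Set (EuclideanSpace ℂ ι)) : Prop :=
  ∀ U, IsOpen U → L ⊆ U → ∃ Ω, IsSteinOpen Ω ∧ L ⊆ Ω ∧ Ω ⊆ U

/-- `f ∈ A(K, ℂ^κ)`: continuous on `K` and holomorphic on the interior of `K`. -/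
def MemA {ι κ : Type*} [Fintype ι] [Fintype κ] (K : Set (EuclideanSpace ℂ ι))
    (f : EuclideanSpace ℂ ι → EuclideanSpace ℂ κ) : Prop :=
  ContinuousOn f K ∧ DifferentiableOn ℂ f (interior K)

/-- `f ∈ H(K, ℂ^κ)`: continuous on `K` and uniformly approximable on `K` by maps
holomorphic on open neighborhoods of `K`. -/
def MemH {ι κ : Type*} [Fintype ι] [Fintype κ] (K : Set (EuclideanSpace ℂ ι))
    (f : EuclideanSpace ℂ ι → EuclideanSpace ℂ κ) : Prop :=
  ContinuousOn f K ∧ ∀ ε > (0:ℝ), ∃ W, IsOpen W ∧ K ⊆ W ∧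
    ∃ g, DifferentiableOn ℂ g W ∧ ∀ z ∈ K, ‖g z - f z‖ < ε

/-- `f ∈ H_loc(K, ℂ^κ)`: continuous on `K`, and every point of `K` has an open neighborhood
`U` such that `f` is uniformly approximable on `K ∩ closure U` by maps holomorphic on
open neighborhoods of `K ∩ closure U`. -/
def MemHloc {ι κ : Type*} [Fintype ι] [Fintype κ] (K : Set (EuclideanSpace ℂ ι))
    (f : EuclideanSpace ℂ ι → EuclideanSpace ℂ κ) : Prop :=
  ContinuousOn f K ∧ ∀ z ∈ K, ∃ U, IsOpen U ∧ z ∈ U ∧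
    ∀ ε > (0:ℝ), ∃ W, IsOpen W ∧ K ∩ closure U ⊆ W ∧
      ∃ g, DifferentiableOn ℂ g W ∧ ∀ w ∈ K ∩ closure U, ‖g w - f w‖ < ε

/-- The point `(z, w)` of `ℂ^ι × ℂ^κ`, viewed in the Euclidean space `ℂ^(ι ⊕ κ) ≅ ℂ^(|ι|+|κ|)`. -/
def graphPt {ι κ : Type*} [Fintype ι] [Fintype κ] (z : EuclideanSpace ℂ ι)
    (w : EuclideanSpace ℂ κ) : EuclideanSpace ℂ (ι ⊕ κ) :=
  WithLp.toLp 2 (Sum.elim z w)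

/-- `A(K, ℂ)` has the Mergelyan property: every continuous function on `K` holomorphic on
the interior of `K` is uniformly approximable on `K` by functions holomorphic on open
neighborhoods of `K`. -/
def MergelyanC {n : ℕ} (K : Set (EuclideanSpace ℂ (Fin n))) : Prop :=
  ∀ f : EuclideanSpace ℂ (Fin n) → ℂ, ContinuousOn f K →
    DifferentiableOn ℂ f (interior K) →
    ∀ ε > (0:ℝ), ∃ W, IsOpen W ∧ K ⊆ W ∧
      ∃ g : EuclideanSpace ℂ (Fin n) → ℂ, DifferentiableOn ℂ g W ∧ ∀ z ∈ K, ‖g z - f z‖ < ε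

open Metric Filter Topology

/-- Cauchy estimate for the Fréchet derivative of a holomorphic map on a ball. -/
lemma cauchyEstFDeriv {E F : Type*} [NormedAddCommGroup E] [NormedSpace ℂ E]
    [NormedAddCommGroup F] [NormedSpace ℂ F] [CompleteSpace F]
    {h : E → F} {z0 : E} {r M : ℝ} (hr : 0 < r)
    (hd : DifferentiableOn ℂ h (ball z0 r))
    (hM : ∀ z ∈ ball z0 r, ‖h z‖ ≤ M) {z : E} (hz : z ∈ ball z0 (r / 2)) :
    ‖fderiv ℂ h z‖ ≤ 4 * M / r := by
  have hM0 : 0 ≤ M := le_trans (norm_nonneg _) (hM z0 (mem_ball_self hr))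
  have hzr : z ∈ ball z0 r := ball_subset_ball (by linarith) hz
  have hdz : DifferentiableAt ℂ h z := hd.differentiableAt (isOpen_ball.mem_nhds hzr)
  refine ContinuousLinearMap.opNorm_le_bound _ (by positivity) fun v => ?_
  rcases eq_or_ne v 0 with rfl | hv
  · simp
  have hv0 : 0 < ‖v‖ := norm_pos_iff.mpr hv
  set ρ : ℝ := r / (4 * ‖v‖) with hρdef
  have hρ : 0 < ρ := by positivity
  have hsub : ∀ w : ℂ, ‖w‖ ≤ ρ → z + w • v ∈ ball z0 r := by
    intro w hw
    have h1 : ‖w • v‖ ≤ r / 4 := by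
      rw [norm_smul]
      have := mul_le_mul_of_nonneg_right hw hv0.le
      calc ‖w‖ * ‖v‖ ≤ ρ * ‖v‖ := this
        _ = r / 4 := by rw [hρdef]; field_simp
    have h2 : dist z z0 < r / 2 := mem_ball.mp hz
    have h3 : dist (z + w • v) z = ‖w • v‖ := by
      rw [dist_eq_norm]; simp
    have := dist_triangle (z + w • v) z z0
    rw [mem_ball]
    rw [h3] at this
    linarith
  have hϕ : DifferentiableOn ℂ (fun w : ℂ => h (z + w • v)) (closure (ball (0:ℂ) ρ)) := by
    intro w hw
    have hw' : ‖w‖ ≤ ρ := by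
      have := closure_ball_subset_closedBall hw
      simpa [mem_closedBall, dist_zero_right] using this
    have hinner : DifferentiableAt ℂ (fun w : ℂ => z + w • v) w :=
      ((differentiableAt_id.smul_const v).const_add z)
    exact ((hd.differentiableAt (isOpen_ball.mem_nhds (hsub w hw'))).comp w
      hinner).differentiableWithinAt
  have hder : HasDerivAt (fun w : ℂ => h (z + w • v)) (fderiv ℂ h z v) 0 := by
    have hc : HasDerivAt (fun w : ℂ => z + w • v) v 0 := by
      simpa using (((hasDerivAt_id (0:ℂ)).smul_const v).const_add z)
    have hfd : HasFDerivAt h (fderiv ℂ h z) (z + (0:ℂ) • v) := by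
      simpa using hdz.hasFDerivAt
    exact hfd.comp_hasDerivAt 0 hc
  have hkey := Complex.norm_deriv_le_of_forall_mem_sphere_norm_le hρ hϕ.diffContOnCl
      (fun w hw => hM _ (hsub w (le_of_eq (mem_sphere_zero_iff_norm.mp hw))))
  calc ‖fderiv ℂ h z v‖ = ‖deriv (fun w : ℂ => h (z + w • v)) 0‖ := by rw [hder.deriv]
    _ ≤ M / ρ := hkey
    _ = 4 * M / r * ‖v‖ := by rw [hρdef]; field_simp

/-- A uniform limit (on a ball) of holomorphic maps is differentiable at the center. -/
lemma differentiableAt_of_locally_approx {E F : Type*} [NormedAddCommGroup E] [NormedSpace ℂ E]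
    [NormedAddCommGroup F] [NormedSpace ℂ F] [CompleteSpace F]
    {f : E → F} {z0 : E} {r : ℝ} (hr : 0 < r)
    (happ : ∀ ε > (0:ℝ), ∃ g : E → F, DifferentiableOn ℂ g (ball z0 r) ∧
      ∀ z ∈ ball z0 r, ‖g z - f z‖ < ε) :
    DifferentiableAt ℂ f z0 := by
  choose G hGd hGa using fun k : ℕ => happ (1 / (k + 1)) (by positivity)
  set s := ball z0 (r / 2) with hsdef
  have hso : IsOpen s := isOpen_ball
  have hz0s : z0 ∈ s := mem_ball_self (by linarith)
  have hsb : s ⊆ ball z0 r := ball_subset_ball (by linarith)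
  have hGd' : ∀ k : ℕ, ∀ x : E, x ∈ s → HasFDerivAt (G k) (fderiv ℂ (G k) x) x := fun k x hx =>
    ((hGd k).differentiableAt (isOpen_ball.mem_nhds (hsb hx))).hasFDerivAt
  have key : ∀ ε > (0:ℝ), ∃ N : ℕ, ∀ k ≥ N, ∀ l ≥ N, ∀ z ∈ s,
      ‖fderiv ℂ (G k) z - fderiv ℂ (G l) z‖ ≤ ε := by
    intro ε hε
    obtain ⟨N, hN⟩ := exists_nat_gt (8 / (r * ε))
    refine ⟨N, fun k hk l hl z hz => ?_⟩
    have hdkl : DifferentiableOn ℂ (fun z => G k z - G l z) (ball z0 r) := (hGd k).sub (hGd l)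
    have hbound : ∀ z ∈ ball z0 r, ‖G k z - G l z‖ ≤ 2 / ((N:ℝ) + 1) := by
      intro z hz
      have h1 := hGa k z hz
      have h2 := hGa l z hz
      have h3 : ‖G k z - G l z‖ ≤ ‖G k z - f z‖ + ‖G l z - f z‖ := by
        have := norm_sub_le (G k z - f z) (G l z - f z)
        simpa [sub_sub_sub_cancel_right] using this
      have hk1 : 1 / ((k:ℝ) + 1) ≤ 1 / ((N:ℝ) + 1) := by
        apply one_div_le_one_div_of_le (by positivity)
        exact_mod_cast Nat.succ_le_succ hk
      have hl1 : 1 / ((l:ℝ) + 1) ≤ 1 / ((N:ℝ) + 1) := by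
        apply one_div_le_one_div_of_le (by positivity)
        exact_mod_cast Nat.succ_le_succ hl
      have h4 : 2 / ((N:ℝ) + 1) = 1 / ((N:ℝ) + 1) + 1 / ((N:ℝ) + 1) := by ring
      linarith
    have hfd := cauchyEstFDeriv hr hdkl hbound hz
    have hdak : DifferentiableAt ℂ (G k) z := ((hGd k).differentiableAt (isOpen_ball.mem_nhds (hsb hz)))
    have hdal : DifferentiableAt ℂ (G l) z := ((hGd l).differentiableAt (isOpen_ball.mem_nhds (hsb hz)))
    have heq : fderiv ℂ (fun z => G k z - G l z) z = fderiv ℂ (G k) z - fderiv ℂ (G l) z :=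
      fderiv_sub hdak hdal
    rw [heq] at hfd
    refine hfd.trans ?_
    have h8 : (8:ℝ) < ((N:ℝ)) * (r * ε) := (div_lt_iff₀ (by positivity)).mp hN
    have hNn : (0:ℝ) ≤ (N:ℝ) := Nat.cast_nonneg N
    have hN1 : ((N:ℝ) + 1) ≠ 0 := by positivity
    have heq8 : 4 * (2 / ((N:ℝ) + 1)) / r = 8 / (((N:ℝ) + 1) * r) := by
      field_simp
      ring
    rw [heq8, div_le_iff₀ (by positivity)]
    nlinarith [mul_pos hr hε]
  set F' : ℕ → E → (E →L[ℂ] F) := fun k z => fderiv ℂ (G k) z with hF'def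
  have hUC : UniformCauchySeqOn F' atTop s := by
    rw [Metric.uniformCauchySeqOn_iff]
    intro ε hε
    obtain ⟨N, hN⟩ := key (ε / 2) (half_pos hε)
    exact ⟨N, fun m hm n hn z hz =>
      lt_of_le_of_lt (by simpa [dist_eq_norm] using hN m hm n hn z hz) (half_lt_self hε)⟩
  have hptC : ∀ z ∈ s, CauchySeq (fun k => F' k z) := by
    intro z hz
    rw [Metric.cauchySeq_iff]
    intro ε hε
    obtain ⟨N, hN⟩ := key (ε / 2) (half_pos hε)
    exact ⟨N, fun m hm n hn =>
      lt_of_le_of_lt (by simpa [dist_eq_norm] using hN m hm n hn z hz) (half_lt_self hε)⟩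
  have hg' : ∀ z ∈ s, ∃ L, Tendsto (fun k => F' k z) atTop (𝓝 L) := fun z hz =>
    cauchySeq_tendsto_of_complete (hptC z hz)
  choose! g' hgl using hg'
  have hfg : ∀ z : E, z ∈ s → Tendsto (fun k => G k z) atTop (𝓝 (f z)) := by
    intro z hz
    rw [Metric.tendsto_atTop]
    intro ε hε
    obtain ⟨N, hN⟩ := exists_nat_gt (1 / ε)
    refine ⟨N, fun k hk => ?_⟩
    have h1 := hGa k z (hsb hz)
    have hk1 : 1 / ((k:ℝ) + 1) ≤ 1 / ((N:ℝ) + 1) := by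
      apply one_div_le_one_div_of_le (by positivity)
      exact_mod_cast Nat.succ_le_succ hk
    have h2 : 1 / ((N:ℝ) + 1) < ε := by
      rw [div_lt_iff₀ (by positivity)]
      have := (div_lt_iff₀ hε).mp hN
      nlinarith [Nat.cast_nonneg (α := ℝ) N]
    rw [dist_eq_norm]
    linarith
  have hTU : TendstoUniformlyOn F' g' atTop s := hUC.tendstoUniformlyOn_of_tendsto hgl
  exact (hasFDerivAt_of_tendstoUniformlyOn hso hTU hGd' hfg hz0s).differentiableAt

lemma differentiable_finset_prod' {α E : Type*} [NormedAddCommGroup E] [NormedSpace ℂ E]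
    (s : Finset α) (f : α → E → ℂ) :
    (∀ i ∈ s, Differentiable ℂ (f i)) → Differentiable ℂ (fun z => ∏ i ∈ s, f i z) := by
  classical
  induction s using Finset.induction_on with
  | empty => intro _; simpa using differentiable_const (1:ℂ)
  | insert _ _ ha ih =>
    intro h
    simp only [Finset.prod_insert ha]
    exact (h _ (Finset.mem_insert_self _ _)).mul (ih fun i hi => h i (Finset.mem_insert_of_mem hi))


set_option maxHeartbeats 1000000 in
/-- **Theorem 4.3**: Mergelyan-type approximation with interpolation. -/
theorem mergelyan_approximation_with_interpolation
    {n m q : ℕ} (K : Set (EuclideanSpace ℂ (Fin n))) (hK : IsCompact K)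
    (hKb : HasSteinBasis K) (hMerg : MergelyanC K)
    (σ : Fin q → EuclideanSpace ℂ (Fin n)) (hσinj : Function.Injective σ)
    (hσK : ∀ j, σ j ∈ K)
    (h : Fin q → EuclideanSpace ℂ (Fin m))
    (f : EuclideanSpace ℂ (Fin n) → EuclideanSpace ℂ (Fin m))
    (hf : MemHloc K f) (ε : ℝ) (hε : 0 < ε) :
    ∃ δ > (0:ℝ), (∀ j, ‖f (σ j) - h j‖ < δ) →
      ∃ U, IsOpen U ∧ K ⊆ U ∧
        ∃ g : EuclideanSpace ℂ (Fin n) → EuclideanSpace ℂ (Fin m),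
          DifferentiableOn ℂ g U ∧ (∀ ζ ∈ K, ‖f ζ - g ζ‖ < ε) ∧ ∀ j, g (σ j) = h j := by
  classical
  obtain ⟨hfc, hfl⟩ := hf
  -- Step 1: `f` is holomorphic on the interior of `K`.
  have hfd : DifferentiableOn ℂ f (interior K) := by
    intro z0 hz0
    obtain ⟨U, hUo, hzU, hap⟩ := hfl z0 (interior_subset hz0)
    have hmem : interior K ∩ U ∈ 𝓝 z0 :=
      Filter.inter_mem (isOpen_interior.mem_nhds hz0) (hUo.mem_nhds hzU)
    obtain ⟨r, hr0, hrsub⟩ := Metric.nhds_basis_closedBall.mem_iff.mp hmem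
    have hball : Metric.ball z0 r ⊆ K ∩ closure U := by
      intro z hz
      have := hrsub (Metric.ball_subset_closedBall hz)
      exact ⟨interior_subset this.1, subset_closure this.2⟩
    have : DifferentiableAt ℂ f z0 := by
      apply differentiableAt_of_locally_approx hr0
      intro ε₁ hε₁
      obtain ⟨W, hWo, hWsub, g, hgd, hge⟩ := hap ε₁ hε₁
      exact ⟨g, hgd.mono (hball.trans hWsub), fun z hz => hge z (hball hz)⟩
    exact this.differentiableWithinAt
  -- Step 2: Lagrange-type entire functions `p j` with `p j (σ i) = δᵢⱼ`.
  set p : Fin q → EuclideanSpace ℂ (Fin n) → ℂ := fun j z =>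
    ∏ i ∈ Finset.univ.erase j,
      ((inner ℂ (σ j - σ i) (z - σ i) : ℂ) / (inner ℂ (σ j - σ i) (σ j - σ i) : ℂ)) with hpdef
  have hpdiff : ∀ j, Differentiable ℂ (p j) := by
    intro j
    apply differentiable_finset_prod'
    intro i _
    have h1 : Differentiable ℂ
        (fun z : EuclideanSpace ℂ (Fin n) => (inner ℂ (σ j - σ i) (z - σ i) : ℂ)) :=
      (innerSL ℂ (σ j - σ i)).differentiable.comp (differentiable_id.sub_const (σ i))
    simpa [div_eq_mul_inv] using
      h1.mul_const ((inner ℂ (σ j - σ i) (σ j - σ i) : ℂ))⁻¹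
  have hp1 : ∀ j, p j (σ j) = 1 := by
    intro j
    apply Finset.prod_eq_one
    intro i hi
    have hne : σ j - σ i ≠ 0 := by
      refine sub_ne_zero.mpr fun hcon => ?_
      exact (Finset.ne_of_mem_erase hi) (hσinj hcon).symm
    have hinner : (inner ℂ (σ j - σ i) (σ j - σ i) : ℂ) ≠ 0 := fun hc =>
      hne (inner_self_eq_zero.mp hc)
    exact div_self hinner
  have hp0 : ∀ j i, i ≠ j → p j (σ i) = 0 := by
    intro j i hij
    apply Finset.prod_eq_zero (Finset.mem_erase.mpr ⟨hij, Finset.mem_univ i⟩)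
    simp
  -- Step 3: a uniform bound `M ≥ 1` for the `p j` on `K`.
  have hcont : ContinuousOn (fun z => ∑ j, ‖p j z‖) K :=
    (continuous_finset_sum _ fun j _ => (hpdiff j).continuous.norm).continuousOn
  obtain ⟨C, hC⟩ := hK.exists_bound_of_continuousOn hcont
  set M := max C 1 with hMdef
  have hM1 : (1:ℝ) ≤ M := le_max_right _ _
  have hM0 : (0:ℝ) < M := lt_of_lt_of_le one_pos hM1
  have hMp : ∀ z ∈ K, ∀ j, ‖p j z‖ ≤ M := by
    intro z hz j
    have h1 : ‖p j z‖ ≤ ∑ j', ‖p j' z‖ :=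
      Finset.single_le_sum (f := fun j' => ‖p j' z‖) (fun i _ => norm_nonneg _)
        (Finset.mem_univ j)
    have h2 : ∑ j', ‖p j' z‖ ≤ C := le_trans (le_abs_self _) (by
      simpa [Real.norm_eq_abs] using hC z hz)
    exact h1.trans (h2.trans (le_max_left _ _))
  -- Step 4: choice of `δ` and auxiliary tolerances.
  have hden : (0:ℝ) < 1 + 2 * q * M := by
    have : (0:ℝ) ≤ (q:ℝ) := Nat.cast_nonneg q
    nlinarith
  set ε' := ε / (1 + 2 * q * M) with hε'def
  have hε'pos : 0 < ε' := div_pos hε hden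
  refine ⟨ε', hε'pos, fun hδ => ?_⟩
  set ε'' := ε' / ((m:ℝ) + 1) with hε''def
  have hε'' : 0 < ε'' := by positivity
  -- Step 5: a global holomorphic approximation `g0` of `f`, via Mergelyan componentwise.
  have hcomp : ∀ i : Fin m, ∃ W, IsOpen W ∧ K ⊆ W ∧
      ∃ g : EuclideanSpace ℂ (Fin n) → ℂ, DifferentiableOn ℂ g W ∧
        ∀ z ∈ K, ‖g z - f z i‖ < ε'' := by
    intro i
    have hdc : ContinuousOn (fun z => f z i) K := by
      have := (EuclideanSpace.proj (𝕜 := ℂ) (i : Fin m)).continuous.comp_continuousOn hfc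
      exact this
    have hdd : DifferentiableOn ℂ (fun z => f z i) (interior K) := by
      have := (EuclideanSpace.proj (𝕜 := ℂ) (i : Fin m)).differentiable.comp_differentiableOn hfd
      exact this
    exact hMerg (fun z => f z i) hdc hdd ε'' hε''
  choose W hWo hKW gc hgcd hgce using hcomp
  set g0 : EuclideanSpace ℂ (Fin n) → EuclideanSpace ℂ (Fin m) := fun z =>
    (EuclideanSpace.equiv (Fin m) ℂ).symm (fun i => gc i z) with hg0def
  set U := ⋂ i, W i with hUdef
  have hUo : IsOpen U := isOpen_iInter_of_finite hWo
  have hKU : K ⊆ U := Set.subset_iInter hKW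
  have hg0d : DifferentiableOn ℂ g0 U := by
    have hpi : DifferentiableOn ℂ (fun z => (fun i => gc i z : Fin m → ℂ)) U :=
      differentiableOn_pi.mpr fun i => (hgcd i).mono (Set.iInter_subset W i)
    exact (((EuclideanSpace.equiv (Fin m) ℂ).symm : (Fin m → ℂ) →L[ℂ]
      EuclideanSpace ℂ (Fin m)).differentiable.comp_differentiableOn hpi)
  have hg0coord : ∀ z i, (f z - g0 z) i = f z i - gc i z := fun z i => rfl
  have hg0close : ∀ z ∈ K, ‖f z - g0 z‖ < ε' := by
    intro z hz
    rw [EuclideanSpace.norm_eq]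
    have hsum : ∑ i, ‖(f z - g0 z) i‖ ^ 2 ≤ ∑ _i : Fin m, ε'' ^ 2 := by
      refine Finset.sum_le_sum fun i _ => ?_
      have h1 : ‖(f z - g0 z) i‖ ≤ ε'' := by
        rw [hg0coord z i]
        have := hgce i z hz
        rw [norm_sub_rev] at this
        exact this.le
      exact pow_le_pow_left₀ (norm_nonneg _) h1 2
    have hsum2 : (∑ _i : Fin m, ε'' ^ 2) = (m:ℝ) * ε'' ^ 2 := by
      simp [Finset.sum_const, Finset.card_univ]
    have hsqrt : Real.sqrt (∑ i, ‖(f z - g0 z) i‖ ^ 2) ≤ Real.sqrt ((m:ℝ) * ε'' ^ 2) :=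
      Real.sqrt_le_sqrt (by rw [← hsum2]; exact hsum)
    refine hsqrt.trans_lt ?_
    have hfin : Real.sqrt ((m:ℝ) * ε'' ^ 2) = Real.sqrt (m:ℝ) * ε'' := by
      rw [Real.sqrt_mul (Nat.cast_nonneg m), Real.sqrt_sq hε''.le]
    rw [hfin]
    have hlt : Real.sqrt (m:ℝ) < (m:ℝ) + 1 := by
      rw [show ((m:ℝ) + 1) = Real.sqrt (((m:ℝ) + 1) ^ 2) from
        (Real.sqrt_sq (by positivity)).symm]
      apply Real.sqrt_lt_sqrt (Nat.cast_nonneg m)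
      nlinarith [Nat.cast_nonneg (α := ℝ) m]
    calc Real.sqrt (m:ℝ) * ε'' < ((m:ℝ) + 1) * ε'' := by
          exact mul_lt_mul_of_pos_right hlt hε''
      _ = ε' := by rw [hε''def]; field_simp
  -- Step 6: interpolation correction.
  set g : EuclideanSpace ℂ (Fin n) → EuclideanSpace ℂ (Fin m) := fun z =>
    g0 z + ∑ j, p j z • (h j - g0 (σ j)) with hgdef
  refine ⟨U, hUo, hKU, g, ?_, ?_, ?_⟩
  · apply hg0d.add
    apply DifferentiableOn.fun_sum
    intro j _
    exact ((hpdiff j).differentiableOn).smul (differentiableOn_const _)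
  · intro ζ hζ
    have h1 := hg0close ζ hζ
    have h2 : ‖∑ j, p j ζ • (h j - g0 (σ j))‖ ≤ (q:ℝ) * (M * (2 * ε')) := by
      refine (norm_sum_le _ _).trans ?_
      have hterm : ∀ j : Fin q, ‖p j ζ • (h j - g0 (σ j))‖ ≤ M * (2 * ε') := by
        intro j
        rw [norm_smul]
        have hbj : ‖h j - g0 (σ j)‖ ≤ 2 * ε' := by
          have ha := hδ j
          have hb := hg0close (σ j) (hσK j)
          have htr : ‖h j - g0 (σ j)‖ ≤ ‖h j - f (σ j)‖ + ‖f (σ j) - g0 (σ j)‖ := by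
            have := norm_add_le (h j - f (σ j)) (f (σ j) - g0 (σ j))
            simpa using this
          have hrev : ‖h j - f (σ j)‖ = ‖f (σ j) - h j‖ := norm_sub_rev _ _
          linarith
        exact mul_le_mul (hMp ζ hζ j) hbj (norm_nonneg _) hM0.le
      calc ∑ j, ‖p j ζ • (h j - g0 (σ j))‖ ≤ ∑ _j : Fin q, M * (2 * ε') :=
            Finset.sum_le_sum fun j _ => hterm j
        _ = (q:ℝ) * (M * (2 * ε')) := by simp [Finset.sum_const, Finset.card_univ]
    have h3 : ‖f ζ - g ζ‖ ≤ ‖f ζ - g0 ζ‖ + ‖∑ j, p j ζ • (h j - g0 (σ j))‖ := by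
      have heq : f ζ - g ζ = (f ζ - g0 ζ) - ∑ j, p j ζ • (h j - g0 (σ j)) := by
        simp only [hgdef]
        exact sub_add_eq_sub_sub _ _ _
      rw [heq]
      exact norm_sub_le _ _
    have hfinal : ε' + (q:ℝ) * (M * (2 * ε')) = ε := by
      rw [hε'def]; field_simp
    linarith
  · intro j
    have hsum : (∑ i, p i (σ j) • (h i - g0 (σ i))) = h j - g0 (σ j) := by
      rw [Finset.sum_eq_single j]
      · rw [hp1 j, one_smul]
      · intro i _ hij
        rw [hp0 i j (Ne.symm hij), zero_smul]
      · intro hcon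
        exact absurd (Finset.mem_univ j) hcon
    show g0 (σ j) + ∑ i, p i (σ j) • (h i - g0 (σ i)) = h j
    rw [hsum]
    abel
end
end

section
/- Let K ⊆ ℂ^n be a compact set with a basis of Stein neighborhoods, let f ∈ H_loc(K, ℂ^m), and let σ = {σ_1, …, σ_k} be a finite subset of K. Then there exist an integer N ≥ 1, an open set V ⊆ ℂ^N containing 0, and a map G : K × V → ℂ^m such that: (1) G is continuous on K × V, G is holomorphic on (interior of K) × V, and for every z ∈ K the map v ↦ G(z, v) is holomorphic on V; (2) G(z, 0) = f(z) for all z ∈ K, and G(z, v) = f(z) for all z ∈ σ and v ∈ V; (3) for every z ∈ K \ σ and every v ∈ V, the derivative of the map v ↦ G(z, v) at v, as a ℂ-linear map ℂ^N → ℂ^m, is surjective. -/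
noncomputable section

open Metric Set Filter Topology


lemma myFderivBound {E F : Type*} [NormedAddCommGroup E] [NormedSpace ℂ E]
    [NormedAddCommGroup F] [NormedSpace ℂ F]
    {h : E → F} {z : E} {ρ ε : ℝ} (hρ : 0 < ρ) (hε : 0 < ε)
    (hd : DifferentiableOn ℂ h (Metric.ball z ρ))
    (hb : ∀ w ∈ Metric.ball z ρ, ‖h w‖ ≤ ε) :
    ‖fderiv ℂ h z‖ ≤ 3 * ε / ρ := by
  have hz : z ∈ ball z ρ := mem_ball_self hρ
  have hdz : DifferentiableAt ℂ h z := hd.differentiableAt (isOpen_ball.mem_nhds hz)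
  refine ContinuousLinearMap.opNorm_le_bound _ (by positivity) fun v => ?_
  rcases eq_or_ne v 0 with rfl | hv
  · simp
  have hvn : 0 < ‖v‖ := norm_pos_iff.mpr hv
  have hRpos : 0 < ρ / ‖v‖ := div_pos hρ hvn
  set φ : ℂ → F := fun t => h (z + t • v) with hφ
  have hmem : ∀ t : ℂ, t ∈ ball (0:ℂ) (ρ / ‖v‖) → z + t • v ∈ ball z ρ := by
    intro t ht
    rw [mem_ball] at ht ⊢
    rw [dist_self_add_left, norm_smul]
    calc ‖t‖ * ‖v‖ < (ρ / ‖v‖) * ‖v‖ := by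
          have := dist_zero_right t ▸ ht
          simp only [dist_zero_right] at ht
          exact mul_lt_mul_of_pos_right ht hvn
      _ = ρ := div_mul_cancel₀ _ (ne_of_gt hvn)
  have hψ : ∀ t : ℂ, DifferentiableAt ℂ (fun s : ℂ => z + s • v) t := by
    intro t
    exact (differentiableAt_id.smul_const v).const_add z
  have hφd : DifferentiableOn ℂ φ (ball (0:ℂ) (ρ / ‖v‖)) := by
    intro t ht
    exact ((hd.differentiableAt (isOpen_ball.mem_nhds (hmem t ht))).comp t (hψ t)).differentiableWithinAt
  have hder : HasDerivAt φ (fderiv ℂ h z v) 0 := by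
    have h2 : HasDerivAt (fun s : ℂ => z + s • v) v 0 := by
      simpa using ((hasDerivAt_id (0:ℂ)).smul_const v).const_add z
    have h1 : HasFDerivAt h (fderiv ℂ h z) ((fun s : ℂ => z + s • v) 0) := by
      simpa using hdz.hasFDerivAt
    exact h1.comp_hasDerivAt 0 h2
  have hmaps : MapsTo φ (ball (0:ℂ) (ρ / ‖v‖)) (ball (φ 0) (3 * ε)) := by
    intro t ht
    have h0 : (0:ℂ) ∈ ball (0:ℂ) (ρ / ‖v‖) := mem_ball_self hRpos
    have b1 : ‖φ t‖ ≤ ε := hb _ (hmem t ht)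
    have b2 : ‖φ 0‖ ≤ ε := hb _ (hmem 0 h0)
    rw [mem_ball, dist_eq_norm]
    calc ‖φ t - φ 0‖ ≤ ‖φ t‖ + ‖φ 0‖ := norm_sub_le _ _
      _ ≤ ε + ε := add_le_add b1 b2
      _ < 3 * ε := by linarith
  have := Complex.norm_deriv_le_div_of_mapsTo_ball hφd (hmaps.mono_right ball_subset_closedBall) hRpos
  rw [hder.deriv] at this
  calc ‖fderiv ℂ h z v‖ ≤ 3 * ε / (ρ / ‖v‖) := this
    _ = 3 * ε / ρ * ‖v‖ := by field_simp

lemma myUnifLimit {E F : Type*} [NormedAddCommGroup E] [NormedSpace ℂ E]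
    [NormedAddCommGroup F] [NormedSpace ℂ F] [CompleteSpace F]
    {f : E → F} {z₀ : E} {r : ℝ} (hr : 0 < r)
    (h : ∀ p : ℕ, ∃ g : E → F, DifferentiableOn ℂ g (Metric.ball z₀ r) ∧
      ∀ w ∈ Metric.ball z₀ r, ‖g w - f w‖ ≤ 1 / (p + 1)) :
    DifferentiableAt ℂ f z₀ := by
  choose g hgd hgb using h
  have hr2 : (0:ℝ) < r / 2 := by linarith
  have hss : ball z₀ (r/2) ⊆ ball z₀ r := ball_subset_ball (by linarith)
  have hsub : ∀ z ∈ ball z₀ (r/2), ball z (r/2) ⊆ ball z₀ r := by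
    intro z hz w hw
    rw [mem_ball] at hz hw ⊢
    calc dist w z₀ ≤ dist w z + dist z z₀ := dist_triangle _ _ _
      _ < r/2 + r/2 := add_lt_add hw hz
      _ = r := by ring
  have hda : ∀ (p : ℕ), ∀ z ∈ ball z₀ (r/2), DifferentiableAt ℂ (g p) z := fun p z hz =>
    (hgd p).differentiableAt (isOpen_ball.mem_nhds (hss hz))
  have key : ∀ p q : ℕ, ∀ z ∈ ball z₀ (r/2),
      ‖fderiv ℂ (g p) z - fderiv ℂ (g q) z‖ ≤ 12 / r * (1/(p+1) + 1/(q+1)) / 2 := by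
    intro p q z hz
    have hdiff : DifferentiableOn ℂ (fun w => g p w - g q w) (ball z (r/2)) :=
      ((hgd p).mono (hsub z hz)).sub ((hgd q).mono (hsub z hz))
    have hbnd : ∀ w ∈ ball z (r/2), ‖g p w - g q w‖ ≤ 1/(p+1) + 1/(q+1) := by
      intro w hw
      have hw' := hsub z hz hw
      calc ‖g p w - g q w‖ = ‖(g p w - f w) - (g q w - f w)‖ := by congr 1; abel
        _ ≤ ‖g p w - f w‖ + ‖g q w - f w‖ := norm_sub_le _ _
        _ ≤ _ := add_le_add (hgb p w hw') (hgb q w hw')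
    have hε : (0:ℝ) < 1/(p+1) + 1/(q+1) := by positivity
    have hB := myFderivBound hr2 hε hdiff hbnd
    rw [fderiv_fun_sub (hda p z hz) (hda q z hz)] at hB
    calc ‖fderiv ℂ (g p) z - fderiv ℂ (g q) z‖ ≤ 3 * (1/(p+1) + 1/(q+1)) / (r/2) := hB
      _ = 12 / r * (1/(p+1) + 1/(q+1)) / 2 := by field_simp; ring
  have hmono : ∀ (p N : ℕ), N ≤ p → (1:ℝ)/(p+1) ≤ 1/(N+1) := by
    intro p N hNp
    apply one_div_le_one_div_of_le (by positivity)
    have : (N:ℝ) ≤ p := Nat.cast_le.mpr hNp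
    linarith
  have key2 : ∀ p q N : ℕ, N ≤ p → N ≤ q → ∀ z ∈ ball z₀ (r/2),
      dist (fderiv ℂ (g p) z) (fderiv ℂ (g q) z) ≤ 12 / r * (1/(N+1)) := by
    intro p q N hp hq z hz
    rw [dist_eq_norm]
    calc ‖fderiv ℂ (g p) z - fderiv ℂ (g q) z‖ ≤ 12 / r * (1/(p+1) + 1/(q+1)) / 2 := key p q z hz
      _ ≤ 12 / r * (1/(N+1) + 1/(N+1)) / 2 := by
          have h1 := hmono p N hp; have h2 := hmono q N hq
          have h12 : (0:ℝ) ≤ 12 / r := by positivity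
          have h3 : (1:ℝ)/(p+1) + 1/(q+1) ≤ 1/(N+1) + 1/(N+1) := by linarith
          nlinarith
      _ = 12 / r * (1/(N+1)) := by ring
  have htend0 : Tendsto (fun N : ℕ => 12 / r * (1/(N+1) : ℝ)) atTop (𝓝 0) := by
    have := tendsto_one_div_add_atTop_nhds_zero_nat.const_mul (12 / r)
    simpa using this
  have hcauchy : ∀ z ∈ ball z₀ (r/2), CauchySeq (fun p => fderiv ℂ (g p) z) := by
    intro z hz
    exact cauchySeq_of_le_tendsto_0 _ (fun p q N hp hq => key2 p q N hp hq z hz) htend0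
  have hex : ∀ z, ∃ L : E →L[ℂ] F, z ∈ ball z₀ (r/2) →
      Tendsto (fun p => fderiv ℂ (g p) z) atTop (𝓝 L) := by
    intro z
    by_cases hz : z ∈ ball z₀ (r/2)
    · obtain ⟨L, hL⟩ := cauchySeq_tendsto_of_complete (hcauchy z hz)
      exact ⟨L, fun _ => hL⟩
    · exact ⟨0, fun hzz => absurd hzz hz⟩
  choose g' hg' using hex
  have hdistb : ∀ p : ℕ, ∀ z ∈ ball z₀ (r/2),
      dist (g' z) (fderiv ℂ (g p) z) ≤ 12 / r * (1/(p+1)) := by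
    intro p z hz
    have htd : Tendsto (fun q => dist (fderiv ℂ (g q) z) (fderiv ℂ (g p) z)) atTop
        (𝓝 (dist (g' z) (fderiv ℂ (g p) z))) := (hg' z hz).dist tendsto_const_nhds
    refine le_of_tendsto htd ?_
    filter_upwards [eventually_ge_atTop p] with q hq
    exact key2 q p p hq le_rfl z hz
  have hunif : TendstoUniformlyOn (fun p z => fderiv ℂ (g p) z) g' atTop (ball z₀ (r/2)) := by
    rw [Metric.tendstoUniformlyOn_iff]
    intro ε hε
    obtain ⟨P, hP⟩ := (htend0.eventually_lt_const hε).exists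
    filter_upwards [eventually_ge_atTop P] with p hp z hz
    calc dist (g' z) (fderiv ℂ (g p) z) ≤ 12 / r * (1/(p+1)) := hdistb p z hz
      _ ≤ 12 / r * (1/(P+1)) := by
          have := hmono p P hp
          have h12 : (0:ℝ) ≤ 12 / r := by positivity
          nlinarith
      _ < ε := hP
  have hpt : ∀ z ∈ ball z₀ (r/2), Tendsto (fun p => g p z) atTop (𝓝 (f z)) := by
    intro z hz
    rw [tendsto_iff_dist_tendsto_zero]
    refine squeeze_zero (fun p => dist_nonneg) (fun p => ?_) tendsto_one_div_add_atTop_nhds_zero_nat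
    rw [dist_eq_norm]
    exact hgb p z (hss hz)
  have hmain := hasFDerivAt_of_tendstoUniformlyOn isOpen_ball hunif
    (fun p x hx => (hda p x hx).hasFDerivAt) hpt (mem_ball_self hr2)
  exact hmain.differentiableAt

lemma memHloc_differentiableOn {n m : ℕ} {K : Set (EuclideanSpace ℂ (Fin n))}
    {f : EuclideanSpace ℂ (Fin n) → EuclideanSpace ℂ (Fin m)} (hf : MemHloc K f) :
    DifferentiableOn ℂ f (interior K) := by
  intro z₀ hz₀
  obtain ⟨U, hU, hzU, happ⟩ := hf.2 z₀ (interior_subset hz₀)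
  obtain ⟨r, hr, hball⟩ := Metric.isOpen_iff.mp (isOpen_interior.inter hU) z₀ ⟨hz₀, hzU⟩
  have hsub : ball z₀ r ⊆ K ∩ closure U := fun w hw =>
    ⟨interior_subset (hball hw).1, subset_closure (hball hw).2⟩
  have happx : ∀ p : ℕ, ∃ g, DifferentiableOn ℂ g (ball z₀ r) ∧
      ∀ w ∈ ball z₀ r, ‖g w - f w‖ ≤ 1/(p+1) := by
    intro p
    obtain ⟨W, hW, hKW, g, hgd, hgb⟩ := happ (1/(p+1)) (by positivity)
    exact ⟨g, hgd.mono (fun w hw => hKW (hsub hw)), fun w hw => (hgb w (hsub hw)).le⟩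
  exact (myUnifLimit hr happx).differentiableWithinAt

/-- **Theorem 4.6** of Poletsky: existence of sprays. If `K ⊆ ℂ^n` is compact with a
basis of Stein neighborhoods, `f ∈ H_loc(K, ℂ^m)` and `σ₁, …, σ_k` is a finite set in
`K`, then there is a spray `G : K × V → ℂ^m`, `V ⊆ ℂ^N` an open neighborhood of `0`,
with exceptional set `σ`, such that `G(·, 0) = f`, `G(σ j, ·) ≡ f(σ j)`, and the
domination condition: for `z ∈ K \ σ` the partial differential `∂ᵥG(z, v) : ℂ^N → ℂ^m`
is surjective. -/
theorem exists_spray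
    {n m k : ℕ} (K : Set (EuclideanSpace ℂ (Fin n))) (hK : IsCompact K)
    (hKb : HasSteinBasis K)
    (f : EuclideanSpace ℂ (Fin n) → EuclideanSpace ℂ (Fin m)) (hf : MemHloc K f)
    (σ : Fin k → EuclideanSpace ℂ (Fin n)) (hσK : ∀ j, σ j ∈ K) :
    ∃ N : ℕ, 1 ≤ N ∧
      ∃ V : Set (EuclideanSpace ℂ (Fin N)), IsOpen V ∧ (0 : EuclideanSpace ℂ (Fin N)) ∈ V ∧
        ∃ G : EuclideanSpace ℂ (Fin n) → EuclideanSpace ℂ (Fin N) → EuclideanSpace ℂ (Fin m),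
          -- (1) regularity: `G ∈ A(K × V, ℂ^m)` and `G(z, ·)` is holomorphic on `V`
          ContinuousOn (fun p => G p.1 p.2) (K ×ˢ V) ∧
          DifferentiableOn ℂ
            (fun p : EuclideanSpace ℂ (Fin n) × EuclideanSpace ℂ (Fin N) => G p.1 p.2)
            (interior K ×ˢ V) ∧
          (∀ z ∈ K, DifferentiableOn ℂ (G z) V) ∧
          -- (2) `G(·, 0) = f` and `G` is constant in `v` at the exceptional points
          (∀ z ∈ K, G z 0 = f z) ∧
          (∀ j, ∀ v ∈ V, G (σ j) v = f (σ j)) ∧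
          -- (3) domination: `∂ᵥ G(z, v)` is surjective off the exceptional set
          (∀ z ∈ K, (∀ j, z ≠ σ j) → ∀ v ∈ V,
            Function.Surjective ⇑(fderiv ℂ (G z) v)) := by
  classical
  have hfd : DifferentiableOn ℂ f (interior K) := memHloc_differentiableOn hf
  set N := m * n ^ k + 1 with hN
  have hcard : Fintype.card (Fin m × (Fin k → Fin n)) ≤ N := by
    simp only [Fintype.card_prod, Fintype.card_fun, Fintype.card_fin, hN]
    exact Nat.le_succ _
  let e : (Fin m × (Fin k → Fin n)) ↪ Fin N :=
    (Fintype.equivFin _).toEmbedding.trans (Fin.castLEEmb hcard)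
  let c : (Fin k → Fin n) → EuclideanSpace ℂ (Fin n) → ℂ :=
    fun I z => ∏ j, (z (I j) - σ j (I j))
  have hcdiff : ∀ I, Differentiable ℂ (c I) := by
    intro I
    intro z
    exact (HasFDerivAt.finset_prod (fun j _ =>
      ((EuclideanSpace.proj (I j) : EuclideanSpace ℂ (Fin n) →L[ℂ] ℂ).hasFDerivAt.sub_const
        (σ j (I j))))).differentiableAt
  let Lmap : EuclideanSpace ℂ (Fin n) →
      (EuclideanSpace ℂ (Fin N) →L[ℂ] EuclideanSpace ℂ (Fin m)) :=
    fun z => ((EuclideanSpace.equiv (Fin m) ℂ).symm :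
        (Fin m → ℂ) ≃L[ℂ] EuclideanSpace ℂ (Fin m)).toContinuousLinearMap.comp
      (ContinuousLinearMap.pi fun i : Fin m =>
        ∑ I : Fin k → Fin n, c I z • (EuclideanSpace.proj (e (i, I)) :
          EuclideanSpace ℂ (Fin N) →L[ℂ] ℂ))
  have hLapply : ∀ z v i, Lmap z v i = ∑ I : Fin k → Fin n, c I z * v (e (i, I)) := by
    intro z v i
    simp [Lmap, ContinuousLinearMap.pi_apply, ContinuousLinearMap.sum_apply,
      ContinuousLinearMap.smul_apply, smul_eq_mul]
  have hrepr : ∀ z v, Lmap z v = (EuclideanSpace.equiv (Fin m) ℂ).symm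
      (fun i => ∑ I : Fin k → Fin n, c I z * v (e (i, I))) := by
    intro z v
    apply (EuclideanSpace.equiv (Fin m) ℂ).injective
    rw [ContinuousLinearEquiv.apply_symm_apply]
    funext i
    exact hLapply z v i
  have hAdiff : Differentiable ℂ
      (fun p : EuclideanSpace ℂ (Fin n) × EuclideanSpace ℂ (Fin N) => Lmap p.1 p.2) := by
    have h1 : Differentiable ℂ (fun p : EuclideanSpace ℂ (Fin n) × EuclideanSpace ℂ (Fin N) =>
        (fun i : Fin m => ∑ I : Fin k → Fin n, c I p.1 * p.2 (e (i, I)) : Fin m → ℂ)) := by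
      rw [differentiable_pi]
      intro i
      apply Differentiable.fun_sum
      intro I _
      exact ((hcdiff I).comp differentiable_fst).mul
        (((EuclideanSpace.proj (e (i, I)) : EuclideanSpace ℂ (Fin N) →L[ℂ] ℂ).differentiable).comp
          differentiable_snd)
    have heq : (fun p : EuclideanSpace ℂ (Fin n) × EuclideanSpace ℂ (Fin N) => Lmap p.1 p.2)
        = (fun x : Fin m → ℂ => (EuclideanSpace.equiv (Fin m) ℂ).symm x) ∘
          (fun p : EuclideanSpace ℂ (Fin n) × EuclideanSpace ℂ (Fin N) =>
            (fun i : Fin m => ∑ I : Fin k → Fin n, c I p.1 * p.2 (e (i, I)))) :=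
      funext fun p => hrepr p.1 p.2
    rw [heq]
    exact ((EuclideanSpace.equiv (Fin m) ℂ).symm.differentiable).comp h1
  let G : EuclideanSpace ℂ (Fin n) → EuclideanSpace ℂ (Fin N) → EuclideanSpace ℂ (Fin m) :=
    fun z v => f z + Lmap z v
  refine ⟨N, Nat.le_add_left 1 _, univ, isOpen_univ, mem_univ _, G, ?_, ?_, ?_, ?_, ?_, ?_⟩
  · show ContinuousOn (fun p : EuclideanSpace ℂ (Fin n) × EuclideanSpace ℂ (Fin N) =>
      f p.1 + Lmap p.1 p.2) (K ×ˢ univ)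
    exact (hf.1.comp continuousOn_fst fun p hp => hp.1).add hAdiff.continuous.continuousOn
  · show DifferentiableOn ℂ (fun p : EuclideanSpace ℂ (Fin n) × EuclideanSpace ℂ (Fin N) =>
      f p.1 + Lmap p.1 p.2) (interior K ×ˢ univ)
    exact (hfd.comp differentiable_fst.differentiableOn fun p hp => hp.1).add
      hAdiff.differentiableOn
  · intro z hz
    show DifferentiableOn ℂ (fun v => f z + Lmap z v) univ
    exact ((Lmap z).differentiable.const_add (f z)).differentiableOn
  · intro z hz
    show f z + Lmap z 0 = f z
    rw [map_zero, add_zero]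
  · intro j v hv
    show f (σ j) + Lmap (σ j) v = f (σ j)
    have hc0 : ∀ I : Fin k → Fin n, c I (σ j) = 0 := fun I =>
      Finset.prod_eq_zero (Finset.mem_univ j) (sub_self _)
    have hL0 : Lmap (σ j) v = 0 := by
      rw [hrepr]
      have hz : (fun i : Fin m => ∑ I : Fin k → Fin n, c I (σ j) * v (e (i, I)))
          = (0 : Fin m → ℂ) := by
        funext i
        simp [hc0]
      rw [hz, map_zero]
    rw [hL0, add_zero]
  · intro z hz hzσ v hv
    have hG : HasFDerivAt (fun v => f z + Lmap z v) (Lmap z) v :=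
      (Lmap z).hasFDerivAt.const_add (f z)
    show Function.Surjective ⇑(fderiv ℂ (fun v => f z + Lmap z v) v)
    rw [hG.fderiv]
    have hI0 : ∃ I0 : Fin k → Fin n, c I0 z ≠ 0 := by
      have hne : ∀ j : Fin k, ∃ i : Fin n, z i ≠ σ j i := by
        intro j
        by_contra hcon
        push_neg at hcon
        exact hzσ j (PiLp.ext hcon)
      choose I0 hI0 using hne
      refine ⟨I0, ?_⟩
      show (∏ j, (z (I0 j) - σ j (I0 j))) ≠ 0
      rw [Finset.prod_ne_zero_iff]
      exact fun j _ => sub_ne_zero.mpr (hI0 j)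
    obtain ⟨I0, hI0⟩ := hI0
    intro w
    set v0 : EuclideanSpace ℂ (Fin N) :=
      (EuclideanSpace.equiv (Fin N) ℂ).symm
        (fun a => ∑ i : Fin m, if e (i, I0) = a then w i / c I0 z else 0) with hv0
    have hv0e : ∀ (i : Fin m) (I : Fin k → Fin n),
        v0 (e (i, I)) = if I = I0 then w i / c I0 z else 0 := by
      intro i I
      show (∑ i' : Fin m, if e (i', I0) = e (i, I) then w i' / c I0 z else 0)
        = if I = I0 then w i / c I0 z else 0
      rcases eq_or_ne I I0 with rfl | hne
      · rw [if_pos rfl, Finset.sum_eq_single i]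
        · rw [if_pos rfl]
        · intro i' _ hi'
          rw [if_neg]
          intro hcon
          exact hi' (congrArg Prod.fst (e.injective hcon))
        · intro hmem
          exact absurd (Finset.mem_univ i) hmem
      · rw [if_neg hne]
        apply Finset.sum_eq_zero
        intro i' _
        rw [if_neg]
        intro hcon
        exact hne ((congrArg Prod.snd (e.injective hcon)).symm)
    refine ⟨v0, ?_⟩
    have hcoord : ∀ i : Fin m, Lmap z v0 i = w i := by
      intro i
      rw [hLapply]
      calc (∑ I : Fin k → Fin n, c I z * v0 (e (i, I)))
          = ∑ I : Fin k → Fin n, (if I = I0 then c I z * (w i / c I0 z) else 0) := by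
            apply Finset.sum_congr rfl
            intro I _
            rw [hv0e]
            split <;> simp
        _ = c I0 z * (w i / c I0 z) := by
            rw [Finset.sum_ite_eq' Finset.univ I0 (fun I => c I z * (w i / c I0 z)),
              if_pos (Finset.mem_univ I0)]
        _ = w i := by rw [mul_comm, div_mul_cancel₀ _ hI0]
    exact PiLp.ext hcoord
end
end

section
/- For every integer p ≥ 1 and every nonempty finite set S ⊆ ℂ^p there exist p polynomials P_1, …, P_p in p complex variables such that S = {z ∈ ℂ^p : P_1(z) = P_2(z) = ⋯ = P_p(z) = 0}, i.e. the common zero set of P_1, …, P_p is exactly S. -/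
noncomputable section

open MvPolynomial Finset

/-- The claim in the proof of Poletsky's Theorem 4.6: every nonempty finite set
`S ⊆ ℂ^p` (`p ≥ 1`) is the common zero set of exactly `p` polynomials in `p` complex
variables. -/
theorem finite_set_is_zero_set_of_p_polynomials
    (p : ℕ) (hp : 1 ≤ p) (S : Set (Fin p → ℂ)) (hfin : S.Finite) (hne : S.Nonempty) :
    ∃ P : Fin p → MvPolynomial (Fin p) ℂ,
      S = {z : Fin p → ℂ | ∀ i, MvPolynomial.eval z (P i) = 0} := by
  classical
  set T : Finset (Fin p → ℂ) := hfin.toFinset with hT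
  have hmemT : ∀ s, s ∈ T ↔ s ∈ S := fun s => hfin.mem_toFinset
  set i0 : Fin p := ⟨0, hp⟩ with hi0
  -- pairs of distinct points
  set pairs : Finset ((Fin p → ℂ) × (Fin p → ℂ)) :=
    (T ×ˢ T).filter (fun st => st.1 ≠ st.2) with hpairs
  -- a generic linear functional
  set F : MvPolynomial (Fin p) ℂ :=
    X i0 * ∏ st ∈ pairs, (∑ j, C (st.1 j - st.2 j) * X j) with hF
  have hFne : F ≠ 0 := by
    apply mul_ne_zero (X_ne_zero i0)
    rw [Finset.prod_ne_zero_iff]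
    intro st hst
    rw [hpairs, Finset.mem_filter] at hst
    obtain ⟨j, hj⟩ : ∃ j, st.1 j ≠ st.2 j := by
      by_contra h
      push_neg at h
      exact hst.2 (funext h)
    intro h0
    have := congrArg (MvPolynomial.eval (Pi.single j (1:ℂ))) h0
    simp [Pi.single_apply, Finset.sum_ite_eq'] at this
    exact hj (sub_eq_zero.mp this)
  obtain ⟨c, hc⟩ : ∃ c : Fin p → ℂ, MvPolynomial.eval c F ≠ 0 := by
    by_contra h
    push_neg at h
    exact hFne (MvPolynomial.funext (fun x => by simp [h x]))
  rw [hF] at hc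
  simp only [map_mul, MvPolynomial.eval_prod, eval_X] at hc
  have hci0 : c i0 ≠ 0 := fun h => hc (by simp [h])
  have hcprod := (mul_ne_zero_iff.mp hc).2
  rw [Finset.prod_ne_zero_iff] at hcprod
  -- the linear functional ℓ
  set ℓ : (Fin p → ℂ) → ℂ := fun z => ∑ j, c j * z j with hℓ
  have hinj : Set.InjOn ℓ T := by
    intro s hs t ht hst
    by_contra hne'
    have hmem : (s, t) ∈ pairs := by
      rw [hpairs, Finset.mem_filter, Finset.mem_product]
      exact ⟨⟨hs, ht⟩, hne'⟩
    have := hcprod (s, t) hmem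
    simp only [map_sum, map_mul, eval_C, eval_X] at this
    apply this
    have : ∑ j, (s j - t j) * c j = ℓ s - ℓ t := by
      rw [hℓ]
      simp only [← Finset.sum_sub_distrib]
      congr 1; funext j; ring
    simp_all [sub_eq_zero]
  -- the polynomials
  set L : MvPolynomial (Fin p) ℂ := ∑ j, C (c j) * X j with hL
  have hevalL : ∀ z, MvPolynomial.eval z L = ℓ z := by
    intro z; simp [hL, hℓ]
  set f : Polynomial ℂ := ∏ s ∈ T, (Polynomial.X - Polynomial.C (ℓ s)) with hf
  set g : Fin p → Polynomial ℂ := fun j => Lagrange.interpolate T ℓ (fun w => w j) with hg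
  set P : Fin p → MvPolynomial (Fin p) ℂ := fun i =>
    if i = i0 then Polynomial.aeval L f else X i - Polynomial.aeval L (g i) with hP
  -- evaluation of composed polynomials
  have hcomp : ∀ (z : Fin p → ℂ) (q : Polynomial ℂ),
      MvPolynomial.eval z (Polynomial.aeval L q) = Polynomial.eval (ℓ z) q := by
    intro z q
    have h1 : MvPolynomial.eval z (Polynomial.aeval L q)
        = MvPolynomial.aeval z (Polynomial.aeval L q) := by
      rw [← MvPolynomial.coe_aeval_eq_eval]; rfl
    rw [h1, ← Polynomial.aeval_algHom_apply (MvPolynomial.aeval z) L q]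
    have h2 : MvPolynomial.aeval z L = ℓ z := by
      rw [← hevalL z, ← MvPolynomial.coe_aeval_eq_eval]; rfl
    rw [h2, Polynomial.aeval_def, Polynomial.eval₂_eq_eval_map, Algebra.algebraMap_self, Polynomial.map_id]
  refine ⟨P, Set.ext fun z => ?_⟩
  simp only [Set.mem_setOf_eq]
  constructor
  · -- z ∈ S ⟹ all P i vanish
    intro hz i
    have hzT : z ∈ T := (hmemT z).mpr hz
    simp only [hP]
    by_cases hi : i = i0
    · rw [if_pos hi, hcomp]
      rw [Polynomial.eval_prod]
      exact Finset.prod_eq_zero hzT (by simp)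
    · rw [if_neg hi, map_sub, eval_X, hcomp]
      rw [Lagrange.eval_interpolate_at_node _ hinj hzT]
      ring
  · -- all P i vanish ⟹ z ∈ S
    intro hz
    have h0 := hz i0
    simp only [hP, if_true] at h0
    rw [hcomp, Polynomial.eval_prod, Finset.prod_eq_zero_iff] at h0
    obtain ⟨s, hsT, hs0⟩ := h0
    simp only [Polynomial.eval_sub, Polynomial.eval_X, Polynomial.eval_C, sub_eq_zero] at hs0
    -- hs0 : ℓ z = ℓ s
    have hcoord : ∀ i, i ≠ i0 → z i = s i := by
      intro i hi
      have := hz i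
      simp only [hP] at this
      rw [if_neg hi, map_sub, eval_X, hcomp, sub_eq_zero] at this
      rw [this, hs0, Lagrange.eval_interpolate_at_node _ hinj hsT]
    have hzi0 : z i0 = s i0 := by
      have hsum : ∑ j, c j * z j = ∑ j, c j * s j := hs0
      rw [← Finset.add_sum_erase _ _ (Finset.mem_univ i0),
          ← Finset.add_sum_erase _ (fun j => c j * s j) (Finset.mem_univ i0)] at hsum
      have hrest : ∑ j ∈ Finset.univ.erase i0, c j * z j
          = ∑ j ∈ Finset.univ.erase i0, c j * s j := by
        apply Finset.sum_congr rfl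
        intro j hj
        rw [hcoord j (Finset.mem_erase.mp hj).1]
      rw [hrest] at hsum
      exact mul_left_cancel₀ hci0 (add_right_cancel hsum)
    have : z = s := by
      funext i
      by_cases hi : i = i0
      · rw [hi]; exact hzi0
      · exact hcoord i hi
    rw [this]
    exact (hmemT s).mp hsT
end
end

section
/- Let W ⊆ ℂ^n be an open set and let g : W × [0,1] → ℂ^p be a continuous map such that for every t ∈ [0,1] the map z ↦ g(z, t) is holomorphic on W. Then for every compact set Q ⊆ W and every ε > 0 there exist an integer d ≥ 0 and holomorphic maps c_0, c_1, …, c_d : W → ℂ^p such that ‖ Σ_{i=0}^{d} c_i(z) t^i − g(z, t) ‖ < ε for all z ∈ Q and all t ∈ [0,1]. -/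
noncomputable section

open scoped unitInterval

lemma bernsteinPoly_natDegree_lt {d k : ℕ} (hk : k ≤ d) :
    (bernsteinPolynomial ℝ d k).natDegree < d + 1 := by
  have h1 : (bernsteinPolynomial ℝ d k).natDegree ≤ d := by
    unfold bernsteinPolynomial
    refine le_trans (Polynomial.natDegree_mul_le) ?_
    have h2 : ((1 - Polynomial.X : Polynomial ℝ) ^ (d - k)).natDegree ≤ d - k := by
      refine le_trans (Polynomial.natDegree_pow_le) ?_
      have h3 : (1 - Polynomial.X : Polynomial ℝ).natDegree ≤ 1 :=
        le_trans (Polynomial.natDegree_sub_le _ _) (by simp)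
      calc (d - k) * (1 - Polynomial.X : Polynomial ℝ).natDegree ≤ (d - k) * 1 :=
            Nat.mul_le_mul_left _ h3
        _ = d - k := by omega
    have h4 : ((Nat.choose d k : Polynomial ℝ) * Polynomial.X ^ k).natDegree ≤ k := by
      refine le_trans (Polynomial.natDegree_mul_le) ?_
      simp [Polynomial.natDegree_natCast]
    omega
  omega

lemma bernsteinPoly_eval {d k : ℕ} (t : ℝ) (ht : t ∈ Set.Icc (0:ℝ) 1) :
    (bernsteinPolynomial ℝ d k).eval t = bernstein d k ⟨t, ht⟩ := by
  simp [bernsteinPolynomial, bernstein_apply]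

/-- The approximation step in the proof of Poletsky's Theorem 4.1: if `W ⊆ ℂ^n` is open
and `g : W × [0,1] → ℂ^p` is continuous and holomorphic in the first variable, then `g`
can be approximated, uniformly on `Q × [0,1]` for any compact `Q ⊆ W`, by maps
`Σ_{i=0}^{d} c_i(z) t^i` that are holomorphic in `z ∈ W` and polynomial in `t`. -/
theorem approx_polynomial_in_t
    {n p : ℕ} (W : Set (EuclideanSpace ℂ (Fin n))) (hW : IsOpen W)
    (g : EuclideanSpace ℂ (Fin n) → ℝ → EuclideanSpace ℂ (Fin p))
    (hgc : ContinuousOn (fun q : EuclideanSpace ℂ (Fin n) × ℝ => g q.1 q.2)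
      (W ×ˢ Set.Icc (0:ℝ) 1))
    (hgh : ∀ t ∈ Set.Icc (0:ℝ) 1, DifferentiableOn ℂ (fun z => g z t) W)
    (Q : Set (EuclideanSpace ℂ (Fin n))) (hQ : IsCompact Q) (hQW : Q ⊆ W)
    (ε : ℝ) (hε : 0 < ε) :
    ∃ (d : ℕ) (c : ℕ → EuclideanSpace ℂ (Fin n) → EuclideanSpace ℂ (Fin p)),
      (∀ i ≤ d, DifferentiableOn ℂ (c i) W) ∧
      ∀ z ∈ Q, ∀ t ∈ Set.Icc (0:ℝ) 1,
        ‖(∑ i ∈ Finset.range (d + 1), t ^ i • c i z) - g z t‖ < ε := by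
  classical
  have hK : IsCompact (Q ×ˢ Set.Icc (0:ℝ) 1) := hQ.prod isCompact_Icc
  have hsub : Q ×ˢ Set.Icc (0:ℝ) 1 ⊆ W ×ˢ Set.Icc (0:ℝ) 1 :=
    Set.prod_mono hQW subset_rfl
  have hgcQ := hgc.mono hsub
  obtain ⟨M0, hM0⟩ := hK.exists_bound_of_continuousOn hgcQ
  set M : ℝ := max M0 1 with hMdef
  have hM1 : (1:ℝ) ≤ M := le_max_right _ _
  have hMpos : (0:ℝ) < M := lt_of_lt_of_le one_pos hM1
  have hMb : ∀ z ∈ Q, ∀ t ∈ Set.Icc (0:ℝ) 1, ‖g z t‖ ≤ M := by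
    intro z hz t ht
    exact (hM0 (z, t) (Set.mk_mem_prod hz ht)).trans (le_max_left _ _)
  -- uniform continuity
  have huc := hK.uniformContinuousOn_of_continuous hgcQ
  rw [Metric.uniformContinuousOn_iff] at huc
  obtain ⟨δ, hδpos, hδ⟩ := huc (ε/2) (half_pos hε)
  -- choose the degree d
  obtain ⟨d, hd⟩ := exists_nat_gt (2 * M * (δ^2)⁻¹ / (ε/2))
  have hdpos : (0:ℝ) < d := lt_of_le_of_lt (by positivity) hd
  refine ⟨d, fun i z => ∑ k : Fin (d+1),
      ((bernsteinPolynomial ℝ d k).coeff i) • g z ((bernstein.z k : ℝ)), ?_, ?_⟩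
  · intro i _
    apply DifferentiableOn.fun_sum
    intro k _
    exact (hgh _ (bernstein.z k).2).const_smul ((bernsteinPolynomial ℝ d k).coeff i)
  · intro z hz t ht
    set x : I := ⟨t, ht⟩ with hxdef
    have key : (∑ i ∈ Finset.range (d + 1), t ^ i • ∑ k : Fin (d+1),
          ((bernsteinPolynomial ℝ d k).coeff i) • g z ((bernstein.z k : ℝ)))
        = ∑ k : Fin (d+1), bernstein d k x • g z ((bernstein.z k : ℝ)) := by
      calc (∑ i ∈ Finset.range (d + 1), t ^ i • ∑ k : Fin (d+1),
              ((bernsteinPolynomial ℝ d k).coeff i) • g z ((bernstein.z k : ℝ)))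
          = ∑ i ∈ Finset.range (d + 1), ∑ k : Fin (d+1),
              ((bernsteinPolynomial ℝ d k).coeff i * t ^ i) • g z ((bernstein.z k : ℝ)) := by
            refine Finset.sum_congr rfl fun i _ => ?_
            rw [Finset.smul_sum]
            refine Finset.sum_congr rfl fun k _ => ?_
            rw [smul_smul, mul_comm]
        _ = ∑ k : Fin (d+1), ∑ i ∈ Finset.range (d + 1),
              ((bernsteinPolynomial ℝ d k).coeff i * t ^ i) • g z ((bernstein.z k : ℝ)) :=
            Finset.sum_comm
        _ = ∑ k : Fin (d+1), bernstein d k x • g z ((bernstein.z k : ℝ)) := by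
            refine Finset.sum_congr rfl fun k _ => ?_
            rw [← Finset.sum_smul, ← Polynomial.eval_eq_sum_range'
              (bernsteinPoly_natDegree_lt (Fin.is_le k)), bernsteinPoly_eval t ht]
    rw [key]
    have prob : (∑ k : Fin (d+1), bernstein d k x) = 1 := bernstein.probability d x
    set S : Finset (Fin (d+1)) :=
      Finset.univ.filter (fun k => dist ((bernstein.z k : ℝ)) t < δ) with hSdef
    have hclose : ∀ k ∈ S, ‖g z ((bernstein.z k : ℝ)) - g z t‖ ≤ ε/2 := by
      intro k hk
      have hkd : dist ((bernstein.z k : ℝ)) t < δ := by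
        simpa [hSdef] using hk
      have hmem1 : (z, ((bernstein.z k : ℝ))) ∈ Q ×ˢ Set.Icc (0:ℝ) 1 :=
        Set.mk_mem_prod hz (bernstein.z k).2
      have hmem2 : (z, t) ∈ Q ×ˢ Set.Icc (0:ℝ) 1 := Set.mk_mem_prod hz ht
      have hdist : dist ((z, ((bernstein.z k : ℝ))) : _ × ℝ) (z, t) < δ := by
        rw [Prod.dist_eq]
        simp only [dist_self]
        exact max_lt hδpos hkd
      have := hδ _ hmem1 _ hmem2 hdist
      rw [dist_eq_norm] at this
      exact le_of_lt this
    have hfar : ∀ k ∈ Sᶜ, (1:ℝ) ≤ (δ^2)⁻¹ * ((x:ℝ) - (bernstein.z k : ℝ))^2 := by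
      intro k hk
      have hkd : δ ≤ dist ((bernstein.z k : ℝ)) t := by
        have := Finset.mem_compl.mp hk
        simpa [hSdef] using this
      have h2 : δ^2 ≤ ((x:ℝ) - (bernstein.z k : ℝ))^2 := by
        rw [Real.dist_eq] at hkd
        have : δ^2 ≤ |(bernstein.z k : ℝ) - t|^2 := by
          apply pow_le_pow_left₀ (le_of_lt hδpos) hkd
        calc δ^2 ≤ |(bernstein.z k : ℝ) - t|^2 := this
          _ = ((x:ℝ) - (bernstein.z k : ℝ))^2 := by rw [sq_abs]; ring_nf; rfl
      calc (1:ℝ) = δ^2 / δ^2 := by field_simp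
        _ ≤ ((x:ℝ) - (bernstein.z k : ℝ))^2 / δ^2 := by gcongr
        _ = (δ^2)⁻¹ * ((x:ℝ) - (bernstein.z k : ℝ))^2 := by rw [div_eq_inv_mul]
    calc ‖(∑ k : Fin (d+1), bernstein d k x • g z ((bernstein.z k : ℝ))) - g z t‖
        = ‖∑ k : Fin (d+1), bernstein d k x • (g z ((bernstein.z k : ℝ)) - g z t)‖ := by
          congr 1
          simp only [smul_sub]
          rw [Finset.sum_sub_distrib, ← Finset.sum_smul, prob, one_smul]
      _ ≤ ∑ k : Fin (d+1), ‖bernstein d k x • (g z ((bernstein.z k : ℝ)) - g z t)‖ :=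
          norm_sum_le _ _
      _ = ∑ k : Fin (d+1), bernstein d k x * ‖g z ((bernstein.z k : ℝ)) - g z t‖ := by
          refine Finset.sum_congr rfl fun k _ => ?_
          rw [norm_smul, Real.norm_eq_abs, abs_of_nonneg bernstein_nonneg]
      _ = (∑ k ∈ S, bernstein d k x * ‖g z ((bernstein.z k : ℝ)) - g z t‖)
          + ∑ k ∈ Sᶜ, bernstein d k x * ‖g z ((bernstein.z k : ℝ)) - g z t‖ :=
          (S.sum_add_sum_compl _).symm
      _ < ε/2 + ε/2 := ?_
      _ = ε := add_halves ε
    apply add_lt_add_of_le_of_lt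
    · calc (∑ k ∈ S, bernstein d k x * ‖g z ((bernstein.z k : ℝ)) - g z t‖)
          ≤ ∑ k ∈ S, bernstein d k x * (ε/2) := by
            refine Finset.sum_le_sum fun k hk => ?_
            exact mul_le_mul_of_nonneg_left (hclose k hk) bernstein_nonneg
        _ = (∑ k ∈ S, bernstein d k x) * (ε/2) := by rw [Finset.sum_mul]
        _ ≤ 1 * (ε/2) := by
            apply mul_le_mul_of_nonneg_right _ (le_of_lt (half_pos hε))
            rw [← prob]
            exact Finset.sum_le_sum_of_subset_of_nonneg (Finset.subset_univ _)
              (fun k _ _ => bernstein_nonneg)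
        _ = ε/2 := one_mul _
    · have hbound : ∀ k ∈ Sᶜ, bernstein d k x * ‖g z ((bernstein.z k : ℝ)) - g z t‖
          ≤ 2 * M * ((δ^2)⁻¹ * ((x:ℝ) - (bernstein.z k : ℝ))^2 * bernstein d k x) := by
        intro k hk
        have hnorm : ‖g z ((bernstein.z k : ℝ)) - g z t‖ ≤ 2 * M := by
          calc ‖g z ((bernstein.z k : ℝ)) - g z t‖
              ≤ ‖g z ((bernstein.z k : ℝ))‖ + ‖g z t‖ := norm_sub_le _ _
            _ ≤ M + M := add_le_add (hMb z hz _ (bernstein.z k).2) (hMb z hz t ht)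
            _ = 2 * M := by ring
        calc bernstein d k x * ‖g z ((bernstein.z k : ℝ)) - g z t‖
            ≤ bernstein d k x * (2 * M) :=
              mul_le_mul_of_nonneg_left hnorm bernstein_nonneg
          _ = (2 * M) * (1 * bernstein d k x) := by ring
          _ ≤ (2 * M) * ((δ^2)⁻¹ * ((x:ℝ) - (bernstein.z k : ℝ))^2 * bernstein d k x) := by
              apply mul_le_mul_of_nonneg_left _ (by positivity)
              exact mul_le_mul_of_nonneg_right (hfar k hk) bernstein_nonneg
      calc (∑ k ∈ Sᶜ, bernstein d k x * ‖g z ((bernstein.z k : ℝ)) - g z t‖)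
          ≤ ∑ k ∈ Sᶜ, 2 * M * ((δ^2)⁻¹ * ((x:ℝ) - (bernstein.z k : ℝ))^2 * bernstein d k x) :=
            Finset.sum_le_sum hbound
        _ ≤ ∑ k : Fin (d+1), 2 * M * ((δ^2)⁻¹ * ((x:ℝ) - (bernstein.z k : ℝ))^2 * bernstein d k x) :=
            Finset.sum_le_sum_of_subset_of_nonneg (Finset.subset_univ _)
              (fun k _ _ => by positivity)
        _ = 2 * M * (δ^2)⁻¹ * ∑ k : Fin (d+1), ((x:ℝ) - (bernstein.z k : ℝ))^2 * bernstein d k x := by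
            rw [Finset.mul_sum]
            refine Finset.sum_congr rfl fun k _ => by ring
        _ = 2 * M * (δ^2)⁻¹ * ((x:ℝ) * (1 - (x:ℝ)) / d) := by
            rw [bernstein.variance (by exact_mod_cast hdpos.ne')]
        _ ≤ 2 * M * (δ^2)⁻¹ * (1 * 1 / d) := by
            gcongr <;> unit_interval
        _ = 2 * M * (δ^2)⁻¹ / d := by ring
        _ < ε/2 := by
            rw [div_lt_iff₀ hdpos]
            calc 2 * M * (δ^2)⁻¹ = (2 * M * (δ^2)⁻¹ / (ε/2)) * (ε/2) := by
                  field_simp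
              _ < d * (ε/2) := mul_lt_mul_of_pos_right hd (half_pos hε)
              _ = ε/2 * d := mul_comm _ _
end
end
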